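/- Let C be a triangulated category equipped with a weight structure w whose heart is Karoubian, in the sense that for every object X ∈ C_{w=0} every idempotent endomorphism of X splits in C. Let m ≤ n be integers. If an object O of C is without weights m,…,n, then there exists a distinguished triangle X → O → Y → X[1] with X ∈ C_{w≤m−1} and Y ∈ C_{w≥n+1}. -/

import Mathlib

open CategoryTheory CategoryTheory.Limits CategoryTheory.Pretriangulated ZeroObject

universe v u

variable (C : Type u) [Category.{v} C] [HasZeroObject C] [Preadditive C] [HasShift C ℤ]
  [∀ n : ℤ, (shiftFunctor C n).Additive] [Pretriangulated C]

/-- A weight structure on a triangulated category `C`: a pair of retract-closed classes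
`le = C_{w≤0}` and `ge = C_{w≥0}` satisfying semi-invariance with respect to translations,
orthogonality, and the existence of weight decompositions. -/
structure WeightStructure where
  /-- the class `C_{w≤0}` -/
  le : Set C
  /-- the class `C_{w≥0}` -/
  ge : Set C
  /-- `C_{w≤0}` is closed under retracts -/
  le_retract : ∀ ⦃X Y : C⦄ (i : X ⟶ Y) (r : Y ⟶ X), i ≫ r = 𝟙 X → le Y → le X
  /-- `C_{w≥0}` is closed under retracts -/
  ge_retract : ∀ ⦃X Y : C⦄ (i : X ⟶ Y) (r : Y ⟶ X), i ≫ r = 𝟙 X → ge Y → ge X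
  /-- `C_{w≤0} ⊆ C_{w≤0}[1]`, i.e. `X ∈ C_{w≤0} → X[-1] ∈ C_{w≤0}` -/
  le_shift : ∀ ⦃X : C⦄, le X → le ((shiftFunctor C (-1 : ℤ)).obj X)
  /-- `C_{w≥0}[1] ⊆ C_{w≥0}`, i.e. `X ∈ C_{w≥0} → X[1] ∈ C_{w≥0}` -/
  ge_shift : ∀ ⦃X : C⦄, ge X → ge ((shiftFunctor C (1 : ℤ)).obj X)
  /-- orthogonality: `Hom(X, Y[1]) = 0` for `X ∈ C_{w≤0}`, `Y ∈ C_{w≥0}` -/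
  orth : ∀ ⦃X Y : C⦄, le X → ge Y → ∀ f : X ⟶ (shiftFunctor C (1 : ℤ)).obj Y, f = 0
  /-- existence of weight decompositions -/
  decomp : ∀ M : C, ∃ (X Y : C) (f : X ⟶ M) (g : M ⟶ Y)
      (h : Y ⟶ (shiftFunctor C (1 : ℤ)).obj X),
      Triangle.mk f g h ∈ (distTriang C) ∧ le X ∧ ge ((shiftFunctor C (-1 : ℤ)).obj Y)

variable {C}

namespace WeightStructure

/-- `X ∈ C_{w≤i} = C_{w≤0}[i]`, i.e. `X[-i] ∈ C_{w≤0}`. -/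
def leDeg (w : WeightStructure C) (i : ℤ) (X : C) : Prop :=
  w.le ((shiftFunctor C (-i)).obj X)

/-- `X ∈ C_{w≥i} = C_{w≥0}[i]`, i.e. `X[-i] ∈ C_{w≥0}`. -/
def geDeg (w : WeightStructure C) (i : ℤ) (X : C) : Prop :=
  w.ge ((shiftFunctor C (-i)).obj X)

/-- The triangle `A → M → B → A[1]` is an `m`-weight decomposition of `M`:
it is distinguished, `A ∈ C_{w≤m}` and `B ∈ C_{w≥m+1}`. -/
def IsWeightDecomp (w : WeightStructure C) (m : ℤ) {A M B : C}
    (f : A ⟶ M) (g : M ⟶ B) (h : B ⟶ (shiftFunctor C (1 : ℤ)).obj A) : Prop :=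
  Triangle.mk f g h ∈ (distTriang C) ∧ w.leDeg m A ∧ w.geDeg (m + 1) B

/-- `g : M ⟶ N` kills weights `m,…,n`: there exist an `n`-weight decomposition of `M` and an
`(m-1)`-weight decomposition of `N` such that the composite `w_{≤n}M → M → N → w_{≥m}N` is `0`. -/
def KillsWeights (w : WeightStructure C) (m n : ℤ) {M N : C} (g : M ⟶ N) : Prop :=
  ∃ (A B A' B' : C) (f : A ⟶ M) (p : M ⟶ B) (δ : B ⟶ (shiftFunctor C (1 : ℤ)).obj A)
    (f' : A' ⟶ N) (p' : N ⟶ B') (δ' : B' ⟶ (shiftFunctor C (1 : ℤ)).obj A'),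
    w.IsWeightDecomp n f p δ ∧ w.IsWeightDecomp (m - 1) f' p' δ' ∧ f ≫ g ≫ p' = 0

/-- `M` is without weights `m,…,n` if `𝟙 M` kills weights `m,…,n`. -/
def WithoutWeights (w : WeightStructure C) (m n : ℤ) (M : C) : Prop :=
  w.KillsWeights m n (𝟙 M)

end WeightStructure


namespace WeightStructure

open CategoryTheory.Category CategoryTheory.Preadditive

variable {w : WeightStructure C}

section Helpers

variable (w)

lemma le_of_iso {X Y : C} (e : X ≅ Y) (h : w.le Y) : w.le X :=
  w.le_retract e.hom e.inv e.hom_inv_id h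

lemma ge_of_iso {X Y : C} (e : X ≅ Y) (h : w.ge Y) : w.ge X :=
  w.ge_retract e.hom e.inv e.hom_inv_id h

lemma le_shiftNeg {X : C} (h : w.le X) : ∀ (n : ℕ) (a : ℤ), a = -(n : ℤ) → w.le (X⟦a⟧) := by
  intro n
  induction n with
  | zero =>
      intro a ha
      have : a = 0 := by omega
      subst this
      exact w.le_of_iso ((shiftFunctorZero C ℤ).app X) h
  | succ n ih =>
      intro a ha
      have h2 := w.le_shift (ih (-(n : ℤ)) rfl)
      exact w.le_of_iso ((shiftFunctorAdd' C (-(n : ℤ)) (-1) a (by omega)).app X) h2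

lemma ge_shiftPos {X : C} (h : w.ge X) : ∀ (n : ℕ) (a : ℤ), a = (n : ℤ) → w.ge (X⟦a⟧) := by
  intro n
  induction n with
  | zero =>
      intro a ha
      have : a = 0 := by omega
      subst this
      exact w.ge_of_iso ((shiftFunctorZero C ℤ).app X) h
  | succ n ih =>
      intro a ha
      have h2 := w.ge_shift (ih (n : ℤ) rfl)
      exact w.ge_of_iso ((shiftFunctorAdd' C (n : ℤ) 1 a (by omega)).app X) h2

lemma leDeg_of_iso (i : ℤ) {X Y : C} (e : X ≅ Y) (h : w.leDeg i Y) : w.leDeg i X :=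
  w.le_of_iso ((shiftFunctor C (-i)).mapIso e) h

lemma geDeg_of_iso (i : ℤ) {X Y : C} (e : X ≅ Y) (h : w.geDeg i Y) : w.geDeg i X :=
  w.ge_of_iso ((shiftFunctor C (-i)).mapIso e) h

lemma leDeg_retract (i : ℤ) {X Y : C} (f : X ⟶ Y) (r : Y ⟶ X) (hfr : f ≫ r = 𝟙 X)
    (h : w.leDeg i Y) : w.leDeg i X :=
  w.le_retract ((shiftFunctor C (-i)).map f) ((shiftFunctor C (-i)).map r)
    (by rw [← Functor.map_comp, hfr, CategoryTheory.Functor.map_id]) h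

lemma geDeg_retract (i : ℤ) {X Y : C} (f : X ⟶ Y) (r : Y ⟶ X) (hfr : f ≫ r = 𝟙 X)
    (h : w.geDeg i Y) : w.geDeg i X :=
  w.ge_retract ((shiftFunctor C (-i)).map f) ((shiftFunctor C (-i)).map r)
    (by rw [← Functor.map_comp, hfr, CategoryTheory.Functor.map_id]) h

lemma leDeg_shift {X : C} {i : ℤ} (h : w.leDeg i X) (j k : ℤ) (hk : i + j = k) :
    w.leDeg k (X⟦j⟧) :=
  w.le_of_iso ((shiftFunctorAdd' C j (-k) (-i) (by omega)).symm.app X) h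

lemma geDeg_shift {X : C} {i : ℤ} (h : w.geDeg i X) (j k : ℤ) (hk : i + j = k) :
    w.geDeg k (X⟦j⟧) :=
  w.ge_of_iso ((shiftFunctorAdd' C j (-k) (-i) (by omega)).symm.app X) h

lemma leDeg_mono {X : C} {i j : ℤ} (h : w.leDeg i X) (hij : i ≤ j) : w.leDeg j X := by
  have h3 : w.le ((X⟦-i⟧)⟦i - j⟧) := w.le_shiftNeg h ((j - i).toNat) (i - j) (by omega)
  exact w.le_of_iso ((shiftFunctorAdd' C (-i) (i - j) (-j) (by ring)).app X) h3

lemma geDeg_mono {X : C} {i j : ℤ} (h : w.geDeg i X) (hij : j ≤ i) : w.geDeg j X := by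
  have h3 : w.ge ((X⟦-i⟧)⟦i - j⟧) := w.ge_shiftPos h ((i - j).toNat) (i - j) (by omega)
  exact w.ge_of_iso ((shiftFunctorAdd' C (-i) (i - j) (-j) (by ring)).app X) h3

lemma hom_zero {X Y : C} {i j : ℤ} (hij : i < j) (hX : w.leDeg i X) (hY : w.geDeg j Y)
    (f : X ⟶ Y) : f = 0 := by
  have hY' : w.geDeg (i + 1) Y := w.geDeg_mono hY (by omega)
  set e := (shiftFunctorAdd' C (-(i + 1)) 1 (-i) (by ring)).app Y with he
  have h0 := w.orth hX hY' ((shiftFunctor C (-i)).map f ≫ e.hom)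
  have h1 : (shiftFunctor C (-i)).map f = 0 := by
    have h2 : ((shiftFunctor C (-i)).map f ≫ e.hom) ≫ e.inv = 0 := by rw [h0, zero_comp]
    simpa using h2
  apply (shiftFunctor C (-i)).map_injective
  rw [h1, Functor.map_zero]

lemma decomp_at (k : ℤ) (M : C) :
    ∃ (X Y : C) (f : X ⟶ M) (g : M ⟶ Y) (h : Y ⟶ X⟦(1 : ℤ)⟧),
      Triangle.mk f g h ∈ (distTriang C) ∧ w.leDeg k X ∧ w.geDeg (k + 1) Y := by
  obtain ⟨X₀, Y₀, f₀, g₀, h₀, hdist, hle, hge⟩ := w.decomp (M⟦-k⟧)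
  have hsh := Pretriangulated.Triangle.shift_distinguished _ hdist k
  set e : (M⟦(-k : ℤ)⟧)⟦k⟧ ≅ M := (shiftFunctorCompIsoId C (-k) k (by ring)).app M with hedef
  set T := (CategoryTheory.shiftFunctor (Triangle C) k).obj (Triangle.mk f₀ g₀ h₀) with hTdef
  refine ⟨X₀⟦k⟧, Y₀⟦k⟧, T.mor₁ ≫ e.hom, e.inv ≫ T.mor₂, T.mor₃, ?_, ?_, ?_⟩
  · refine isomorphic_distinguished _ hsh _ ?_
    exact Triangle.isoMk _ _ (Iso.refl _) e.symm (Iso.refl _) (by exact (assoc _ _ _).trans ((congrArg (fun x => T.mor₁ ≫ x) e.hom_inv_id).trans ((comp_id _).trans (id_comp _).symm))) (by exact comp_id _)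
      (by exact (congrArg (fun x => T.mor₃ ≫ x) ((shiftFunctor C (1 : ℤ)).map_id _)).trans ((comp_id _).trans (id_comp _).symm))
  · exact w.le_of_iso ((shiftFunctorCompIsoId C k (-k) (by ring)).app X₀) hle
  · exact w.ge_of_iso ((shiftFunctorAdd' C k (-(k + 1)) (-1) (by ring)).symm.app Y₀) hge

lemma leDeg_ext {i : ℤ} (T : Triangle C) (hT : T ∈ distTriang C)
    (h1 : w.leDeg i T.obj₁) (h3 : w.leDeg i T.obj₃) : w.leDeg i T.obj₂ := by
  obtain ⟨P, Q, fp, gq, hq, hdist, hP, hQ⟩ := w.decomp_at i T.obj₂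
  have h5 : T.mor₁ ≫ gq = 0 := w.hom_zero (by omega) h1 hQ _
  obtain ⟨g, hg⟩ := Triangle.yoneda_exact₂ _ hT gq h5
  have hg0 : g = 0 := w.hom_zero (by omega) h3 hQ g
  have he₁ : gq = 0 := by rw [hg, hg0, comp_zero]
  obtain ⟨r, hr⟩ := Triangle.coyoneda_exact₂ _ hdist (𝟙 T.obj₂) (by erw [id_comp]; exact he₁)
  exact w.leDeg_retract i r fp hr.symm hP

end Helpers

end WeightStructure

namespace WeightStructure

open CategoryTheory.Category CategoryTheory.Preadditive

section Step

variable (w : WeightStructure C)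

/-- The key step: given a `k`-type weight decomposition `A → O → B` of `O` (with `A ∈ w≤k`,
`B ∈ w≥n+1`), and an `(m-1)`-weight decomposition `A' → O → B'` such that `A → O → B'`
vanishes, one can improve the decomposition to `X → O → Y` with `X ∈ w≤k-1`, `Y ∈ w≥n+1`,
still with `X → O → B'` vanishing. -/
lemma step
    (hkar : ∀ X : C, w.le X → w.ge X → ∀ e : X ⟶ X, e ≫ e = e →
      ∃ (Y : C) (r : X ⟶ Y) (s : Y ⟶ X), s ≫ r = 𝟙 Y ∧ r ≫ s = e)
    (m n k : ℤ) (hmk : m ≤ k) (hkn : k ≤ n)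
    {O A B A' B' : C} (f : A ⟶ O) (p : O ⟶ B) (dl : B ⟶ A⟦(1 : ℤ)⟧)
    (f' : A' ⟶ O) (p' : O ⟶ B') (dl' : B' ⟶ A'⟦(1 : ℤ)⟧)
    (hT : Triangle.mk f p dl ∈ (distTriang C)) (hA : w.leDeg k A) (hB : w.geDeg (n + 1) B)
    (hT' : Triangle.mk f' p' dl' ∈ (distTriang C)) (hA' : w.leDeg (m - 1) A')
    (hfp' : f ≫ p' = 0) :
    ∃ (X Y : C) (fX : X ⟶ O) (pY : O ⟶ Y) (dY : Y ⟶ X⟦(1 : ℤ)⟧),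
      Triangle.mk fX pY dY ∈ (distTriang C) ∧ w.leDeg (k - 1) X ∧ w.geDeg (n + 1) Y ∧
        fX ≫ p' = 0 := by
  -- `α : A ⟶ A'` with `f = α ≫ f'`
  obtain ⟨(α : A ⟶ A'), hα₀⟩ := Triangle.coyoneda_exact₂ _ hT' f hfp'
  have hα : f = α ≫ f' := hα₀
  -- `α' : A' ⟶ A` with `f' = α' ≫ f`
  have hf'p : f' ≫ p = 0 := w.hom_zero (by omega) hA' hB _
  obtain ⟨(α' : A' ⟶ A), hα'₀⟩ := Triangle.coyoneda_exact₂ _ hT f' hf'p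
  have hα' : f' = α' ≫ f := hα'₀
  -- decomposition of `A` at level `k-1` : `A₀ → A → Abar`
  obtain ⟨A₀, Abar, a, b, d, hTa, hA₀, hAbar_ge⟩ := w.decomp_at (k - 1) A
  have hAbarge : w.geDeg k Abar := by
    have h := hAbar_ge; rwa [show k - 1 + 1 = k by ring] at h
  have hAbarle : w.leDeg k Abar := by
    refine w.leDeg_ext (Triangle.mk a b d).rotate (rot_of_distTriang _ hTa) hA ?_
    exact w.leDeg_shift hA₀ 1 k (by ring)
  -- the endomorphism u of A
  set u : A ⟶ A := α ≫ α' with hu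
  have huf : u ≫ f = f := by rw [hu, assoc, ← hα', ← hα]
  have hub : u ≫ b = 0 := by
    have h0 : α' ≫ b = 0 := w.hom_zero (by omega) hA' hAbarge _
    rw [hu, assoc, h0, comp_zero]
  -- `1 - u` factors through `B⟦-1⟧`
  have hTinv := inv_rot_of_distTriang _ hT
  set Tinv := (Triangle.mk f p dl).invRotate with hTinvdef
  have h1u : (𝟙 A - u) ≫ Tinv.mor₂ = 0 := by
    show (𝟙 A - u) ≫ f = 0
    rw [sub_comp, id_comp, huf, sub_self]
  obtain ⟨γ, hγ⟩ := Triangle.coyoneda_exact₂ _ hTinv (𝟙 A - u) h1u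
  -- `b` factors as `γ ≫ c` where `c = j ≫ b`
  set c : Tinv.obj₁ ⟶ Abar := Tinv.mor₁ ≫ b with hc
  have hbfact : b = γ ≫ c := by
    have h1 : (𝟙 A - u) ≫ b = b := by rw [sub_comp, id_comp, hub, sub_zero]
    erw [← h1, hγ, assoc, hc]; rfl
  have hBm1 : w.geDeg n Tinv.obj₁ := w.geDeg_shift hB (-1) n (by ring)
  -- `γ` factors through `Abar`
  have haγ : a ≫ γ = 0 := w.hom_zero (by omega) hA₀ hBm1 _
  obtain ⟨γ', hγ'₀⟩ := Triangle.yoneda_exact₂ _ hTa γ haγ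
  have hγ' : γ = b ≫ γ' := hγ'₀
  -- decompose `B⟦-1⟧` at level `k`
  obtain ⟨Bbar, Bplus, s, t, dB, hTb, hBbar_le, hBplus⟩ := w.decomp_at k Tinv.obj₁
  have hγ't : γ' ≫ t = 0 := w.hom_zero (by omega) hAbarle hBplus _
  obtain ⟨γbar, hγbar₀⟩ := Triangle.coyoneda_exact₂ _ hTb γ' hγ't
  have hγbar : γ' = γbar ≫ s := hγbar₀
  -- the idempotent ε on Abar
  set cbar : Bbar ⟶ Abar := s ≫ c with hcbar
  set ε : Abar ⟶ Abar := γbar ≫ cbar with hε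
  have hbε : b ≫ ε = b := by
    have e1 : γbar ≫ cbar = γ' ≫ c := by erw [hcbar, ← assoc, ← hγbar]
    erw [hε, e1, ← assoc, ← hγ', ← hbfact]
  have hcd : c ≫ d = 0 := by
    have h23 : b ≫ d = 0 := comp_distTriang_mor_zero₂₃ _ hTa
    erw [hc, assoc, h23, comp_zero]
  have hεd : ε ≫ d = 0 := by
    erw [hε, hcbar, assoc, assoc, hcd, comp_zero, comp_zero]
  -- `1 - ε` factors through `d`
  obtain ⟨ξ₀, hξ₀⟩ := Triangle.yoneda_exact₂ _ (rot_of_distTriang _ hTa) (𝟙 Abar - ε)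
    (by show b ≫ (𝟙 Abar - ε) = 0; rw [comp_sub, comp_id, hbε, sub_self])
  let ξ : A₀⟦(1 : ℤ)⟧ ⟶ Abar := ξ₀
  have hξ : 𝟙 Abar - ε = d ≫ ξ := hξ₀
  -- ε is idempotent
  have hεε : ε ≫ ε = ε := by
    have h2 : ε ≫ (𝟙 Abar - ε) = 0 := by
      rw [hξ, ← assoc, hεd, zero_comp]
    rw [comp_sub, comp_id] at h2
    exact (sub_eq_zero.mp h2).symm
  -- split the idempotent using the Karoubian assumption (transported to degree k)
  have hεsh : (shiftFunctor C (-k)).map ε ≫ (shiftFunctor C (-k)).map ε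
      = (shiftFunctor C (-k)).map ε := by rw [← Functor.map_comp, hεε]
  obtain ⟨Y₀', r₀, s₀', hs₀r₀, hr₀s₀⟩ := hkar _ hAbarle hAbarge _ hεsh
  set E := shiftFunctorCompIsoId C (-k) k (by ring) with hE
  set Y₀ := Y₀'⟦k⟧ with hY₀
  set r : Abar ⟶ Y₀ := E.inv.app Abar ≫ r₀⟦k⟧' with hr
  set s₀ : Y₀ ⟶ Abar := s₀'⟦k⟧' ≫ E.hom.app Abar with hs₀
  have hs₀r : s₀ ≫ r = 𝟙 Y₀ := by
    rw [hs₀, hr, assoc, ← assoc (E.hom.app Abar), Iso.hom_inv_id_app, id_comp,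
      ← Functor.map_comp, hs₀r₀]
    exact (shiftFunctor C k).map_id _
  have hrs₀ : r ≫ s₀ = ε := by
    have h1 : r₀⟦k⟧' ≫ s₀'⟦k⟧' = ((shiftFunctor C (-k)).map ε)⟦k⟧' := by
      rw [← Functor.map_comp, hr₀s₀]
    have h2 : ((shiftFunctor C (-k)).map ε)⟦k⟧' ≫ E.hom.app Abar = E.hom.app Abar ≫ ε :=
      E.hom.naturality ε
    rw [hr, hs₀, assoc, ← assoc (r₀⟦k⟧'), h1, h2, ← assoc, Iso.inv_hom_id_app]; simp
  have hs₀ε : s₀ ≫ ε = s₀ := by rw [← hrs₀, ← assoc, hs₀r, id_comp]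
  have hs₀d : s₀ ≫ d = 0 := by rw [← hs₀ε, assoc, hεd, comp_zero]
  -- lift `s₀` to `ι : Y₀ ⟶ A`
  obtain ⟨ι₀, hι₀⟩ := Triangle.coyoneda_exact₃ _ hTa s₀ hs₀d
  let ι : Y₀ ⟶ A := ι₀
  have hι : s₀ = ι ≫ b := hι₀
  -- correct it to `ι'` killing `f`
  have hιub : (ι ≫ u) ≫ b = 0 := by rw [assoc, hub, comp_zero]
  obtain ⟨ζ, hζ₀⟩ := Triangle.coyoneda_exact₂ _ hTa (ι ≫ u) hιub
  have hζ : ι ≫ u = ζ ≫ a := hζ₀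
  set ι' : Y₀ ⟶ A := ι - ζ ≫ a with hι'def
  have hι'f : ι' ≫ f = 0 := by
    have h1 : ι ≫ f = ζ ≫ (a ≫ f) := by
      have h2 : (ι ≫ u) ≫ f = ζ ≫ (a ≫ f) := by erw [hζ, assoc]
      rw [assoc, huf] at h2
      exact h2
    erw [hι'def, sub_comp, h1, assoc, sub_self]
  have hι'b : ι' ≫ b = s₀ := by
    have h0 := comp_distTriang_mor_zero₁₂ _ hTa
    have h0' : a ≫ b = 0 := h0
    erw [hι'def, sub_comp, ← hι, assoc, h0', comp_zero, sub_zero]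
  set ρ : A ⟶ Y₀ := b ≫ r with hρ
  have hι'ρ : ι' ≫ ρ = 𝟙 Y₀ := by rw [hρ, ← assoc, hι'b, hs₀r]
  -- cone of ι'
  obtain ⟨Q, π, dQ, hTq⟩ := distinguished_cocone_triangle ι'
  have hdQ : dQ = 0 := by
    have h31 := comp_distTriang_mor_zero₃₁ _ hTq
    have h31' : dQ ≫ ι'⟦(1 : ℤ)⟧' = 0 := h31
    have h2 : dQ ≫ ι'⟦(1 : ℤ)⟧' ≫ ρ⟦(1 : ℤ)⟧' = 0 := by rw [← assoc, h31', zero_comp]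
    rwa [← Functor.map_comp, hι'ρ, CategoryTheory.Functor.map_id, comp_id] at h2
  -- `σ : Q ⟶ A`
  obtain ⟨σ₀, hσfact₀⟩ := Triangle.yoneda_exact₂ _ hTq (𝟙 A - ρ ≫ ι')
    (by show ι' ≫ (𝟙 A - ρ ≫ ι') = 0
        rw [comp_sub, comp_id, ← assoc, hι'ρ, id_comp, sub_self])
  let σ : Q ⟶ A := σ₀
  have hσfact : 𝟙 A - ρ ≫ ι' = π ≫ σ := hσfact₀
  have hι'π : ι' ≫ π = 0 := comp_distTriang_mor_zero₁₂ _ hTq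
  have hπσπ : π ≫ σ ≫ π = π := by
    have h1 : (𝟙 A - ρ ≫ ι') ≫ π = π := by
      rw [sub_comp, id_comp, assoc, hι'π, comp_zero, sub_zero]
    rw [← assoc, ← hσfact, h1]
  have hσπ : σ ≫ π = 𝟙 Q := by
    obtain ⟨ξ₂, hξ₂⟩ := Triangle.yoneda_exact₂ _ (rot_of_distTriang _ hTq) (σ ≫ π - 𝟙 Q)
      (by show π ≫ (σ ≫ π - 𝟙 Q) = 0
          rw [comp_sub, comp_id, hπσπ, sub_self])
    have : σ ≫ π - 𝟙 Q = dQ ≫ ξ₂ := hξ₂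
    erw [hdQ, zero_comp, sub_eq_zero] at this
    exact this
  -- `f` factors through `Q`
  obtain ⟨fQ₀, hfQ₀⟩ := Triangle.yoneda_exact₂ _ hTq f hι'f
  let fQ : Q ⟶ O := fQ₀
  have hfQ : f = π ≫ fQ := hfQ₀
  have hfQp' : fQ ≫ p' = 0 := by
    have h1 : π ≫ fQ ≫ p' = 0 := by rw [← assoc, ← hfQ, hfp']
    rw [← id_comp (fQ ≫ p'), ← hσπ, assoc, h1, comp_zero]
  -- cone of fQ
  obtain ⟨Y, pY, dY, hTy⟩ := distinguished_cocone_triangle fQ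
  -- `Y` is a retract of `B`, hence of weights ≥ n+1
  obtain ⟨β₀, hβ₁₀, hβ₂₀⟩ := complete_distinguished_triangle_morphism
    (Triangle.mk f p dl) (Triangle.mk fQ pY dY) hT hTy π (𝟙 O)
    (by show f ≫ 𝟙 O = π ≫ fQ; rw [comp_id, hfQ])
  let β : B ⟶ Y := β₀
  have hβ₁ : p ≫ β = 𝟙 O ≫ pY := hβ₁₀
  have hβ₂ : dl ≫ π⟦(1 : ℤ)⟧' = β ≫ dY := hβ₂₀
  obtain ⟨β'₀, hβ'₁₀, hβ'₂₀⟩ := complete_distinguished_triangle_morphism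
    (Triangle.mk fQ pY dY) (Triangle.mk f p dl) hTy hT σ (𝟙 O)
    (by show fQ ≫ 𝟙 O = σ ≫ f
        rw [comp_id, hfQ, ← assoc, hσπ, id_comp])
  let β' : Y ⟶ B := β'₀
  have hβ'₁ : pY ≫ β' = 𝟙 O ≫ p := hβ'₁₀
  have hβ'₂ : dY ≫ σ⟦(1 : ℤ)⟧' = β' ≫ dl := hβ'₂₀
  have hβ₁' : p ≫ β = pY := by rwa [id_comp] at hβ₁
  have hβ'₁' : pY ≫ β' = p := by rwa [id_comp] at hβ'₁
  have hββ : IsIso (β' ≫ β) := by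
    have hφ : ∀ X : C, True := fun _ => trivial
    refine isIso₃_of_isIso₁₂
      ({ hom₁ := 𝟙 Q, hom₂ := 𝟙 O, hom₃ := β' ≫ β,
         comm₁ := by exact (comp_id _).trans (id_comp _).symm
         comm₂ := by
           show pY ≫ β' ≫ β = 𝟙 O ≫ pY
           rw [← assoc, hβ'₁', hβ₁', id_comp]
         comm₃ := by
           show dY ≫ (𝟙 Q)⟦(1 : ℤ)⟧' = (β' ≫ β) ≫ dY
           rw [CategoryTheory.Functor.map_id, comp_id, assoc, ← hβ₂, ← assoc, ← hβ'₂,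
             assoc, ← Functor.map_comp, hσπ, CategoryTheory.Functor.map_id, comp_id]
       } : Triangle.mk fQ pY dY ⟶ Triangle.mk fQ pY dY) hTy hTy ?_ ?_ <;> dsimp <;>
       exact IsIso.id _
  have hY : w.geDeg (n + 1) Y := by
    refine w.geDeg_retract _ β' (β ≫ inv (β' ≫ β)) ?_ hB
    rw [← assoc, IsIso.hom_inv_id]
  -- now show `Q` has weights ≤ k-1
  obtain ⟨R, qR, dR, hTr⟩ := distinguished_cocone_triangle (a ≫ π)
  obtain ⟨m₁₀, hm₁a₀, hm₁b₀⟩ := complete_distinguished_triangle_morphism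
    (Triangle.mk a b d) (Triangle.mk (a ≫ π) qR dR) hTa hTr (𝟙 A₀) π (by exact (id_comp _).symm)
  let m₁ : Abar ⟶ R := m₁₀
  have hm₁a' : b ≫ m₁ = π ≫ qR := hm₁a₀
  have hm₁b : d ≫ (𝟙 A₀)⟦(1 : ℤ)⟧' = m₁ ≫ dR := hm₁b₀
  have hm₁dR : m₁ ≫ dR = d := by
    rw [← hm₁b, CategoryTheory.Functor.map_id, comp_id]
  have haπσ : (a ≫ π) ≫ σ = 𝟙 A₀ ≫ a := by
    have h1 : a ≫ ρ = 0 := by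
      rw [hρ, ← assoc]
      have h0 : a ≫ b = 0 := comp_distTriang_mor_zero₁₂ _ hTa
      rw [h0, zero_comp]
    rw [id_comp, assoc, ← hσfact, comp_sub, comp_id, ← assoc, h1, zero_comp, sub_zero]
  obtain ⟨t₀₀, ht₀a₀, ht₀b₀⟩ := complete_distinguished_triangle_morphism
    (Triangle.mk (a ≫ π) qR dR) (Triangle.mk a b d) hTr hTa (𝟙 A₀) σ haπσ
  let t₀ : R ⟶ Abar := t₀₀
  have ht₀a' : qR ≫ t₀ = σ ≫ b := ht₀a₀
  have ht₀b : dR ≫ (𝟙 A₀)⟦(1 : ℤ)⟧' = t₀ ≫ d := ht₀b₀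
  have hθ : IsIso (t₀ ≫ m₁) := by
    refine isIso₃_of_isIso₁₂
      ({ hom₁ := 𝟙 A₀, hom₂ := σ ≫ π, hom₃ := t₀ ≫ m₁,
         comm₁ := by
           show (a ≫ π) ≫ σ ≫ π = 𝟙 A₀ ≫ a ≫ π
           rw [← assoc, haπσ, id_comp, id_comp]
         comm₂ := by
           show qR ≫ t₀ ≫ m₁ = (σ ≫ π) ≫ qR
           rw [← assoc, ht₀a', assoc, hm₁a', ← assoc]
         comm₃ := by
           show dR ≫ (𝟙 A₀)⟦(1 : ℤ)⟧' = (t₀ ≫ m₁) ≫ dR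
           rw [CategoryTheory.Functor.map_id, comp_id, assoc, hm₁dR]
           have h := ht₀b
           rw [CategoryTheory.Functor.map_id, comp_id] at h
           exact h
       } : Triangle.mk (a ≫ π) qR dR ⟶ Triangle.mk (a ≫ π) qR dR) hTr hTr ?_ ?_
    · dsimp; exact IsIso.id _
    · dsimp; erw [hσπ]; exact IsIso.id _
  have ht'm₁ : (inv (t₀ ≫ m₁) ≫ t₀) ≫ m₁ = 𝟙 R := by rw [assoc, IsIso.inv_hom_id]
  have hs₀m₁ : s₀ ≫ m₁ = 0 := by
    rw [← hι'b, assoc, hm₁a', ← assoc, hι'π, zero_comp]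
  have hεm₁ : ε ≫ m₁ = 0 := by rw [← hrs₀, assoc, hs₀m₁, comp_zero]
  have hm₁φ : m₁ ≫ (dR ≫ (ξ ≫ m₁)) = m₁ := by
    rw [← assoc, hm₁dR, ← assoc, ← hξ, sub_comp, id_comp, hεm₁, sub_zero]
  have hdRsplit : dR ≫ (ξ ≫ m₁) = 𝟙 R := by
    have h1 : ((inv (t₀ ≫ m₁) ≫ t₀) ≫ m₁) ≫ (dR ≫ (ξ ≫ m₁))
        = (inv (t₀ ≫ m₁) ≫ t₀) ≫ m₁ := by
      rw [assoc (inv (t₀ ≫ m₁) ≫ t₀) m₁ (dR ≫ (ξ ≫ m₁)), hm₁φ]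
    rwa [ht'm₁, id_comp] at h1
  have hqR : qR = 0 := by
    have h23 : qR ≫ dR = 0 := comp_distTriang_mor_zero₂₃ _ hTr
    have h2 : qR ≫ (dR ≫ (ξ ≫ m₁)) = 0 := by rw [← assoc, h23, zero_comp]
    rwa [hdRsplit, comp_id] at h2
  -- `Q⟦1⟧` is a retract of `A₀⟦1⟧`
  have hTrr := rot_of_distTriang _ (rot_of_distTriang _ hTr)
  obtain ⟨sQ₀, hsQ₀⟩ := Triangle.coyoneda_exact₃ _ hTrr (𝟙 (Q⟦(1 : ℤ)⟧))
    (by show 𝟙 (Q⟦(1 : ℤ)⟧) ≫ (-(qR⟦(1 : ℤ)⟧')) = 0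
        rw [hqR, Functor.map_zero, neg_zero, comp_zero])
  let sQ : Q⟦(1 : ℤ)⟧ ⟶ A₀⟦(1 : ℤ)⟧ := sQ₀
  have hsQ' : sQ ≫ (-((a ≫ π)⟦(1 : ℤ)⟧')) = 𝟙 (Q⟦(1 : ℤ)⟧) := hsQ₀.symm
  have hQ1 : w.leDeg k (Q⟦(1 : ℤ)⟧) := by
    refine w.leDeg_retract k sQ (-((a ≫ π)⟦(1 : ℤ)⟧')) hsQ' ?_
    exact w.leDeg_shift hA₀ 1 k (by ring)
  have hQ : w.leDeg (k - 1) Q := by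
    have h1 := w.leDeg_shift hQ1 (-1) (k - 1) (by ring)
    exact w.leDeg_of_iso _ ((shiftFunctorCompIsoId C 1 (-1) (by ring)).symm.app Q) h1
  exact ⟨Q, Y, fQ, pY, dY, hTy, hQ, hY, hfQp'⟩

end Step

end WeightStructure


/-- Proposition 3.1.3: if the heart of `w` is Karoubian (idempotent endomorphisms of objects of
`C_{w=0}` split in `C`), then any object `O` without weights `m,…,n` admits a decomposition
avoiding these weights: a distinguished triangle `X → O → Y → X[1]` with `X ∈ C_{w≤m-1}` and
`Y ∈ C_{w≥n+1}`. -/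
theorem withoutWeights_has_avoiding_decomposition_of_heart_karoubian
    (w : WeightStructure C)
    (hkar : ∀ X : C, w.le X → w.ge X → ∀ e : X ⟶ X, e ≫ e = e →
      ∃ (Y : C) (r : X ⟶ Y) (s : Y ⟶ X), s ≫ r = 𝟙 Y ∧ r ≫ s = e)
    (m n : ℤ) (hmn : m ≤ n) (O : C) (hO : w.WithoutWeights m n O) :
    ∃ (X Y : C) (f : X ⟶ O) (p : O ⟶ Y) (δ : Y ⟶ (shiftFunctor C (1 : ℤ)).obj X),
      Triangle.mk f p δ ∈ (distTriang C) ∧ w.leDeg (m - 1) X ∧ w.geDeg (n + 1) Y := by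
  obtain ⟨A, B, A', B', f, p, δ, f', p', δ', hd1, hd2, hcomp⟩ := hO
  obtain ⟨hT1, hA1, hB1⟩ := hd1
  obtain ⟨hT2, hA2, hB2⟩ := hd2
  have hfp' : f ≫ p' = 0 := by simpa using hcomp
  have key : ∀ j : ℕ, (j : ℤ) ≤ n + 1 - m →
      ∃ (X Y : C) (fX : X ⟶ O) (pY : O ⟶ Y) (dY : Y ⟶ X⟦(1 : ℤ)⟧),
        Triangle.mk fX pY dY ∈ (distTriang C) ∧ w.leDeg (n - j) X ∧ w.geDeg (n + 1) Y ∧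
          fX ≫ p' = 0 := by
    intro j
    induction j with
    | zero =>
        intro _
        exact ⟨A, B, f, p, δ, hT1, by simpa using hA1, hB1, hfp'⟩
    | succ i ih =>
        intro hle
        have hle' : (i : ℤ) ≤ n + 1 - m := by push_cast at hle ⊢; omega
        obtain ⟨X, Y, fX, pY, dY, hT, hX, hY, h0⟩ := ih hle'
        have hmk : m ≤ n - i := by push_cast at hle; omega
        obtain ⟨X', Y', fX', pY', dY', hT', hX', hY', h0'⟩ :=
          w.step hkar m n (n - i) hmk (by omega) fX pY dY f' p' δ'
            hT hX hY hT2 hA2 h0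
        refine ⟨X', Y', fX', pY', dY', hT', ?_, hY', h0'⟩
        have : n - (i : ℤ) - 1 = n - ((i : ℕ) + 1 : ℕ) := by push_cast; ring
        rwa [this] at hX'
  obtain ⟨X, Y, fX, pY, dY, hT, hX, hY, _⟩ := key (n + 1 - m).toNat (by omega)
  refine ⟨X, Y, fX, pY, dY, hT, ?_, hY⟩
  have h1 : ((n + 1 - m).toNat : ℤ) = n + 1 - m := by omega
  rw [h1] at hX
  have h2 : n - (n + 1 - m) = m - 1 := by ring
  rwa [h2] at hX
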